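/- Rev_{F*}(0) = B·(1 − (1 − v₀/B)·(1 + 1/(n−1))·p^{n−1}), and Rev_{F*}(0) ≥ B·(1 − pⁿ) if and only if (n−1)²·μ ≥ B·(n − 1/(n−1)). -/

import Mathlib

/-- The `n`-bidder second-price revenue with reserve `r` against the CDF `F`,
truncated at the upper bound `B`. -/
noncomputable def nRev (n : ℕ) (B : ℝ) (F : ℝ → ℝ) (r : ℝ) : ℝ :=
  r * (1 - (F r) ^ n)
    + ∫ t in r..B, (1 - (n : ℝ) * (F t) ^ (n - 1) + ((n : ℝ) - 1) * (F t) ^ n)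

/-- For the two-point worst-case distribution (value `v₀` with probability
`p = 1 - 1/(n-1)²` and value `B` with probability `1 - p`): the revenue of a second-price
auction with no reserve is `B(1 - (1 - v₀/B)(1 + 1/(n-1))p^{n-1})`, and it is at least
the revenue `B(1 - pⁿ)` of posting price `B` iff `(n-1)²μ ≥ B(n - 1/(n-1))`. -/
theorem two_point_revenue (n : ℕ) (hn : 3 ≤ n) (B μ : ℝ)
    (hB : 0 < B) (hμ0 : 0 < μ) (hμB : μ < B) (hBμ : ((n : ℝ) - 1) ^ 2 * μ ≥ B)
    (p v₀ : ℝ) (hp : p = 1 - 1 / ((n : ℝ) - 1) ^ 2)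
    (hv₀ : v₀ = μ - (B - μ) / (((n : ℝ) - 1) ^ 2 - 1))
    (Fs : ℝ → ℝ)
    (hFs : ∀ v, Fs v = if v < v₀ then 0 else if v < B then p else 1) :
    nRev n B Fs 0 = B * (1 - (1 - v₀ / B) * (1 + 1 / ((n : ℝ) - 1)) * p ^ (n - 1)) ∧
    (nRev n B Fs 0 ≥ B * (1 - p ^ n) ↔
      ((n : ℝ) - 1) ^ 2 * μ ≥ B * ((n : ℝ) - 1 / ((n : ℝ) - 1))) := by
  have hn3 : (3:ℝ) ≤ (n:ℝ) := by exact_mod_cast hn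
  have hk0 : (0:ℝ) < (n:ℝ) - 1 := by linarith
  have hk2 : (2:ℝ) ≤ (n:ℝ) - 1 := by linarith
  have hD : (0:ℝ) < ((n:ℝ)-1)^2 - 1 := by nlinarith
  have hv0 : 0 ≤ v₀ := by
    rw [hv₀, sub_nonneg, div_le_iff₀ hD]; nlinarith
  have hvB : v₀ < B := by
    have : 0 < (B - μ)/(((n:ℝ)-1)^2 - 1) := div_pos (by linarith) hD
    rw [hv₀]; linarith
  have hp0 : 0 < p := by
    have h1 : 1/((n:ℝ)-1)^2 < 1 := by
      rw [div_lt_one (by positivity)]; nlinarith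
    rw [hp]; linarith
  have hpow : p ^ n = p ^ (n-1) * p := by
    rw [← pow_succ]; congr 1; omega
  have hne1 : ∀ᵐ x : ℝ, x ≠ v₀ := by
    rw [MeasureTheory.ae_iff]
    simpa using Real.volume_singleton
  have hne2 : ∀ᵐ x : ℝ, x ≠ B := by
    rw [MeasureTheory.ae_iff]
    simpa using Real.volume_singleton
  have hae1 : ∀ᵐ x : ℝ, x ∈ Set.uIoc (0:ℝ) v₀ →
      (1 - (n:ℝ) * (Fs x) ^ (n-1) + ((n:ℝ)-1) * (Fs x) ^ n) = 1 := by
    filter_upwards [hne1] with x hx hmem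
    rw [Set.uIoc_of_le hv0] at hmem
    have hxlt : x < v₀ := lt_of_le_of_ne hmem.2 hx
    rw [hFs x, if_pos hxlt, zero_pow (by omega : n - 1 ≠ 0), zero_pow (by omega : n ≠ 0)]
    ring
  have hae2 : ∀ᵐ x : ℝ, x ∈ Set.uIoc v₀ B →
      (1 - (n:ℝ) * (Fs x) ^ (n-1) + ((n:ℝ)-1) * (Fs x) ^ n)
        = (1 - (n:ℝ) * p ^ (n-1) + ((n:ℝ)-1) * p ^ n) := by
    filter_upwards [hne2] with x hx hmem
    rw [Set.uIoc_of_le hvB.le] at hmem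
    have hxB : x < B := lt_of_le_of_ne hmem.2 hx
    rw [hFs x, if_neg (not_lt.2 hmem.1.le), if_pos hxB]
  have he1 : (fun t => 1 - (n:ℝ) * (Fs t) ^ (n-1) + ((n:ℝ)-1) * (Fs t) ^ n)
      =ᵐ[MeasureTheory.volume.restrict (Set.uIoc (0:ℝ) v₀)] (fun _ => (1:ℝ)) :=
    (MeasureTheory.ae_restrict_iff' measurableSet_uIoc).2 hae1
  have he2 : (fun t => 1 - (n:ℝ) * (Fs t) ^ (n-1) + ((n:ℝ)-1) * (Fs t) ^ n)
      =ᵐ[MeasureTheory.volume.restrict (Set.uIoc v₀ B)]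
        (fun _ => (1 - (n:ℝ) * p ^ (n-1) + ((n:ℝ)-1) * p ^ n)) :=
    (MeasureTheory.ae_restrict_iff' measurableSet_uIoc).2 hae2
  have hi1 : IntervalIntegrable
      (fun t => 1 - (n:ℝ) * (Fs t) ^ (n-1) + ((n:ℝ)-1) * (Fs t) ^ n) MeasureTheory.volume 0 v₀ :=
    (intervalIntegrable_const (c := (1:ℝ))).congr_ae he1.symm
  have hi2 : IntervalIntegrable
      (fun t => 1 - (n:ℝ) * (Fs t) ^ (n-1) + ((n:ℝ)-1) * (Fs t) ^ n) MeasureTheory.volume v₀ B :=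
    (intervalIntegrable_const (c := (1 - (n:ℝ) * p ^ (n-1) + ((n:ℝ)-1) * p ^ n))).congr_ae he2.symm
  have hI1 : ∫ t in (0:ℝ)..v₀, (1 - (n:ℝ) * (Fs t) ^ (n-1) + ((n:ℝ)-1) * (Fs t) ^ n) = v₀ := by
    rw [intervalIntegral.integral_congr_ae hae1, intervalIntegral.integral_const]
    simp
  have hI2 : ∫ t in v₀..B, (1 - (n:ℝ) * (Fs t) ^ (n-1) + ((n:ℝ)-1) * (Fs t) ^ n)
      = (B - v₀) * (1 - (n:ℝ) * p ^ (n-1) + ((n:ℝ)-1) * p ^ n) := by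
    rw [intervalIntegral.integral_congr_ae hae2, intervalIntegral.integral_const]
    simp [smul_eq_mul]
  have hmain : nRev n B Fs 0 = v₀ + (B - v₀) * (1 - (n:ℝ) * p ^ (n-1) + ((n:ℝ)-1) * p ^ n) := by
    unfold nRev
    rw [← intervalIntegral.integral_add_adjacent_intervals hi1 hi2, hI1, hI2]
    ring
  have hBne : B ≠ 0 := ne_of_gt hB
  have hkne : ((n:ℝ) - 1) ≠ 0 := ne_of_gt hk0
  have key1 : ∀ q : ℝ, v₀ + (B - v₀) * (1 - (n:ℝ)*q + ((n:ℝ)-1)*(q*p))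
      = B * (1 - (1 - v₀ / B) * (1 + 1 / ((n:ℝ) - 1)) * q) := by
    intro q
    rw [hp]
    field_simp
    ring
  have part1 : nRev n B Fs 0 = B * (1 - (1 - v₀ / B) * (1 + 1 / ((n : ℝ) - 1)) * p ^ (n - 1)) := by
    rw [hmain, hpow, show ((n:ℝ)-1) * (p^(n-1) * p) = ((n:ℝ)-1) * (p^(n-1)*p) from rfl]
    exact key1 (p^(n-1))
  refine ⟨part1, ?_⟩
  have key2 : nRev n B Fs 0 - B * (1 - p^n)
      = p^(n-1) * (B*p - (B - v₀)*(1 + 1/((n:ℝ)-1))) := by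
    rw [hmain, hpow, hp]
    field_simp
    ring
  have hident : (B*p - (B - v₀)*(1 + 1/((n:ℝ)-1))) * (((n:ℝ)-1)^3 * (((n:ℝ)-1)^2 - 1))
      = (n:ℝ) * ((n:ℝ)-1)^2 * (((n:ℝ)-1)^2 * μ - B * ((n:ℝ) - 1/((n:ℝ)-1))) := by
    rw [hp, hv₀]
    field_simp
    ring
  have hP1 : (0:ℝ) < ((n:ℝ)-1)^3 * (((n:ℝ)-1)^2 - 1) := by positivity
  have hP2 : (0:ℝ) < (n:ℝ) * ((n:ℝ)-1)^2 := by positivity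
  rw [ge_iff_le, ← sub_nonneg, key2,
    mul_nonneg_iff_of_pos_left (pow_pos hp0 (n-1)),
    ← mul_nonneg_iff_of_pos_right hP1, hident,
    mul_nonneg_iff_of_pos_left hP2, sub_nonneg, ge_iff_le]
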